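/- Let f be β-smooth, 0 < η < 1/β, and choose ε > 1/(2η(1−βη)) so that ρ := 2ηε(1−βη) − 1 > 0. If x_{t+1} = x_t − η∇f(x_t) + v_t, then for every T ∈ ℕ: ∑_{t=0}^{T} |∇f(x_t)|² ≤ (2ε/ρ)(f(x_0) − inf f) + (ε/ρ)(ε + 2β) ∑_{t=0}^{T} |v_t|². -/

import Mathlib

open InnerProductSpace

/-- Descent lemma for β-Lipschitz gradient. -/
lemma descent_lemma {d : ℕ} (f : EuclideanSpace ℝ (Fin d) → ℝ) (β : ℝ)
    (hf : Differentiable ℝ f)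
    (hlip : ∀ x y, ‖gradient f x - gradient f y‖ ≤ β * ‖x - y‖)
    (x y : EuclideanSpace ℝ (Fin d)) :
    f y ≤ f x + ⟪gradient f x, y - x⟫_ℝ + β / 2 * ‖y - x‖ ^ 2 := by
  set c : ℝ → EuclideanSpace ℝ (Fin d) := fun t => x + t • (y - x) with hc
  set a : ℝ := ⟪gradient f x, y - x⟫_ℝ with ha
  set b : ℝ := β / 2 * ‖y - x‖ ^ 2 with hb
  set h : ℝ → ℝ := fun t => f (c t) - t * a - t ^ 2 * b with hh
  have hcd : ∀ t : ℝ, HasDerivAt c (y - x) t := by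
    intro t
    have h0 := ((hasDerivAt_id t).smul_const (y - x)).const_add x
    rw [one_smul] at h0
    exact h0
  have hfc : ∀ t : ℝ, HasDerivAt (fun s => f (c s)) (⟪gradient f (c t), y - x⟫_ℝ) t := by
    intro t
    have h1 : HasFDerivAt f (toDual ℝ _ (gradient f (c t))) (c t) :=
      (hf (c t)).hasGradientAt
    have h2 := h1.comp_hasDerivAt t (hcd t)
    rw [toDual_apply_apply] at h2
    exact h2
  have hhd : ∀ t : ℝ, HasDerivAt h (⟪gradient f (c t), y - x⟫_ℝ - a - 2 * t * b) t := by
    intro t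
    have := ((hfc t).sub ((hasDerivAt_id t).const_mul a)).sub
      (((hasDerivAt_pow 2 t)).mul_const b)
    have e : h = ((fun s => f (c s)) - fun y => a * id y) - fun y => y ^ 2 * b := by
      funext s; simp only [hh, Pi.sub_apply, id]; ring
    rw [e]
    exact this.congr_deriv (by rw [show (2:ℕ) - 1 = 1 from rfl]; ring)
  have hdiff : Differentiable ℝ h := fun t => (hhd t).differentiableAt
  have key : AntitoneOn h (Set.Icc 0 1) := by
    apply antitoneOn_of_deriv_nonpos (convex_Icc 0 1)
    · exact hdiff.continuous.continuousOn
    · exact fun t _ => (hdiff t).differentiableWithinAt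
    · intro t ht
      rw [interior_Icc] at ht
      rw [(hhd t).deriv]
      have h2 : ⟪gradient f (c t) - gradient f x, y - x⟫_ℝ ≤ β * t * ‖y - x‖ ^ 2 := by
        calc ⟪gradient f (c t) - gradient f x, y - x⟫_ℝ
            ≤ ‖gradient f (c t) - gradient f x‖ * ‖y - x‖ := real_inner_le_norm _ _
          _ ≤ (β * ‖c t - x‖) * ‖y - x‖ := by
              have := hlip (c t) x
              have h3 : (0:ℝ) ≤ ‖y - x‖ := norm_nonneg _
              nlinarith [norm_nonneg (gradient f (c t) - gradient f x)]
          _ = β * t * ‖y - x‖ ^ 2 := by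
              have : ‖c t - x‖ = t * ‖y - x‖ := by
                simp [hc, norm_smul, abs_of_pos ht.1]
              rw [this]; ring
      have h4 : ⟪gradient f (c t), y - x⟫_ℝ - a = ⟪gradient f (c t) - gradient f x, y - x⟫_ℝ := by
        rw [ha, inner_sub_left]
      rw [sub_sub, ← sub_sub, h4]
      have : 2 * t * b = β * t * ‖y - x‖ ^ 2 := by rw [hb]; ring
      linarith [h2, this.ge]
  have h01 : h 1 ≤ h 0 := key (by norm_num) (by norm_num) (by norm_num)
  have hc0 : c 0 = x := by simp [hc]
  have hc1 : c 1 = y := by simp [hc]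
  simp only [hh, hc0, hc1] at h01
  norm_num at h01
  linarith

lemma div_step_aux (ε ρ β A V G2 : ℝ) (hρ0 : 0 < ρ) (hε0 : 0 < ε)
    (h : ρ / (2 * ε) * G2 ≤ A + (ε / 2 + β) * V) :
    G2 ≤ 2 * ε / ρ * A + ε / ρ * (ε + 2 * β) * V := by
  rw [div_mul_eq_mul_div, div_le_iff₀ (by positivity)] at h
  rw [show 2 * ε / ρ * A + ε / ρ * (ε + 2 * β) * V = (2 * ε * A + ε * (ε + 2 * β) * V) / ρ
    from by field_simp, le_div_iff₀ hρ0]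
  nlinarith [h]

theorem stmt_4 {d : ℕ} (f : EuclideanSpace ℝ (Fin d) → ℝ) (β η ε ρ : ℝ) (hβ : 0 < β)
    (hf : Differentiable ℝ f)
    (hlip : ∀ x y, ‖gradient f x - gradient f y‖ ≤ β * ‖x - y‖)
    (hbdd : BddBelow (Set.range f))
    (hη0 : 0 < η) (hηβ : η < 1 / β)
    (hε : ε > 1 / (2 * η * (1 - β * η)))
    (hρ : ρ = 2 * η * ε * (1 - β * η) - 1)
    (v x : ℕ → EuclideanSpace ℝ (Fin d))
    (hx : ∀ t, x (t + 1) = x t - η • gradient f (x t) + v t) (T : ℕ) :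
    ∑ t ∈ Finset.range (T + 1), ‖gradient f (x t)‖ ^ 2 ≤
      (2 * ε / ρ) * (f (x 0) - sInf (Set.range f))
        + (ε / ρ) * (ε + 2 * β) * ∑ t ∈ Finset.range (T + 1), ‖v t‖ ^ 2 := by
  have hβη : β * η < 1 := by
    rw [lt_div_iff₀ hβ] at hηβ; linarith [mul_comm η β]
  have hden : 0 < 2 * η * (1 - β * η) := by nlinarith
  have hε0 : 0 < ε := lt_trans (by positivity) hε
  have hρ0 : 0 < ρ := by
    rw [hρ]
    have := (div_lt_iff₀ hden).mp hε
    nlinarith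
  -- per-step inequality
  have step : ∀ t, ‖gradient f (x t)‖ ^ 2 ≤
      (2 * ε / ρ) * (f (x t) - f (x (t + 1))) + (ε / ρ) * (ε + 2 * β) * ‖v t‖ ^ 2 := by
    intro t
    set g := gradient f (x t) with hg
    have hd : x (t + 1) - x t = -(η • g) + v t := by rw [hx t]; abel
    have hdesc := descent_lemma f β hf hlip (x t) (x (t + 1))
    rw [hd] at hdesc
    have hinner : ⟪g, -(η • g) + v t⟫_ℝ = -η * ‖g‖ ^ 2 + ⟪g, v t⟫_ℝ := by
      rw [inner_add_right, inner_neg_right, real_inner_smul_right, real_inner_self_eq_norm_sq]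
      ring
    have hnorm : ‖-(η • g) + v t‖ ^ 2 = η ^ 2 * ‖g‖ ^ 2 - 2 * η * ⟪g, v t⟫_ℝ + ‖v t‖ ^ 2 := by
      rw [← sub_eq_neg_add, norm_sub_sq_real, real_inner_smul_right, norm_smul,
        Real.norm_eq_abs, mul_pow, sq_abs, real_inner_comm]
      ring
    rw [hinner, hnorm] at hdesc
    set G := ‖g‖ ^ 2 with hG
    set V := ‖v t‖ ^ 2 with hV
    set i := ⟪g, v t⟫_ℝ with hi
    clear_value G V i
    have hGn : 0 ≤ G := by rw [hG]; positivity
    have hVn : 0 ≤ V := by rw [hV]; positivity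
    have hεne : ε ≠ 0 := ne_of_gt hε0
    -- Young: i ≤ 1/(2ε) G + ε/2 V
    have hyoung : i ≤ 1 / (2 * ε) * G + ε / 2 * V := by
      have h1 : i ≤ ‖g‖ * ‖v t‖ := by rw [hi]; exact real_inner_le_norm _ _
      have hkeyeq : 1 / (2 * ε) * G + ε / 2 * V - ‖g‖ * ‖v t‖
          = (‖g‖ - ε * ‖v t‖) ^ 2 / (2 * ε) := by
        rw [hG, hV]; field_simp; ring
      have h2 : 0 ≤ (‖g‖ - ε * ‖v t‖) ^ 2 / (2 * ε) := by positivity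
      linarith [hkeyeq ▸ h2]
    have hcoef : 0 ≤ 1 - β * η := le_of_lt (by linarith)
    have hib : (1 - β * η) * i ≤ 1 / (2 * ε) * G + ε / 2 * V := by
      rcases le_or_gt i 0 with hi0 | hi0
      · have : (1 - β * η) * i ≤ 0 := mul_nonpos_of_nonneg_of_nonpos hcoef hi0
        have : (0:ℝ) ≤ 1 / (2 * ε) * G + ε / 2 * V := by positivity
        linarith [mul_nonpos_of_nonneg_of_nonpos hcoef hi0]
      · have h5 : (1 - β * η) * i ≤ 1 * i := by
          apply mul_le_mul_of_nonneg_right _ hi0.le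
          nlinarith
        linarith
    -- hdesc gives: f(x(t+1)) - f(x t) ≤ (βη²/2 - η) G + (1-βη) i + β/2 V
    have hkey : ρ / (2 * ε) * G ≤ f (x t) - f (x (t + 1)) + (ε / 2 + β) * V := by
      have hρe : ρ / (2 * ε) = η * (1 - β * η) - 1 / (2 * ε) := by
        rw [hρ]; field_simp
      rw [hρe]
      nlinarith [hdesc, hib, mul_nonneg (mul_nonneg hβ.le (sq_nonneg η)) hGn,
        mul_nonneg hβ.le hVn]
    exact div_step_aux ε ρ β _ V G hρ0 hε0 hkey
  -- sum up
  have hsum : ∑ t ∈ Finset.range (T + 1), ‖gradient f (x t)‖ ^ 2 ≤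
      ∑ t ∈ Finset.range (T + 1),
        ((2 * ε / ρ) * (f (x t) - f (x (t + 1))) + (ε / ρ) * (ε + 2 * β) * ‖v t‖ ^ 2) :=
    Finset.sum_le_sum fun t _ => step t
  rw [Finset.sum_add_distrib, ← Finset.mul_sum, ← Finset.mul_sum] at hsum
  have htel : ∑ t ∈ Finset.range (T + 1), (f (x t) - f (x (t + 1))) =
      f (x 0) - f (x (T + 1)) := by
    have := Finset.sum_range_sub' (fun t => f (x t)) (T + 1)
    simpa using this
  rw [htel] at hsum
  have hinf : sInf (Set.range f) ≤ f (x (T + 1)) := csInf_le hbdd ⟨_, rfl⟩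
  have : (2 * ε / ρ) * (f (x 0) - f (x (T + 1))) ≤
      (2 * ε / ρ) * (f (x 0) - sInf (Set.range f)) := by
    apply mul_le_mul_of_nonneg_left (by linarith) (by positivity)
  linarith
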